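/- In any infinite sequence of finite trees, some tree is a minor of a later tree in the sequence (Kruskal's tree theorem for graph minors, a special case used in the graph minors project). -/

import Mathlib

/-- `H` is a minor of `G`. -/
def SimpleGraph.IsMinor {W V : Type} (H : SimpleGraph W) (G : SimpleGraph V) : Prop :=
  ∃ f : W → Set V,
    (∀ w, (f w).Nonempty) ∧
    (∀ w, ((G.induce (f w)).Connected)) ∧
    (Pairwise fun w₁ w₂ => Disjoint (f w₁) (f w₂)) ∧
    (∀ ⦃w₁ w₂⦄, H.Adj w₁ w₂ → ∃ u ∈ f w₁, ∃ v ∈ f w₂, G.Adj u v)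

set_option linter.dupNamespace false


inductive RTree : Type
  | node : List RTree → RTree

namespace RTree

def size : RTree → ℕ
  | .node l => 1 + (l.attach.map fun x => x.1.size).sum
decreasing_by simp only [RTree.node.sizeOf_spec]; have := List.sizeOf_lt_of_mem x.2; omega

theorem size_lt {t : RTree} {l : List RTree} (h : t ∈ l) : t.size < (RTree.node l).size := by
  have : t.size ∈ l.attach.map fun x => x.1.size :=
    List.mem_map.2 ⟨⟨t, h⟩, List.mem_attach _ _, rfl⟩
  have := List.single_le_sum (fun x _ => Nat.zero_le x) _ this
  simp only [size]; omega

inductive Emb : RTree → RTree → Prop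
  | sub {s t : RTree} {l : List RTree} : Emb s t → t ∈ l → Emb s (RTree.node l)
  | lift {ls lt : List RTree} : List.SublistForall₂ Emb ls lt → Emb (RTree.node ls) (RTree.node lt)

theorem sublistForall₂_exists_mem {r : RTree → RTree → Prop} :
    ∀ {l₁ l₂ : List RTree}, List.SublistForall₂ r l₁ l₂ → ∀ x ∈ l₁, ∃ y ∈ l₂, r x y := by
  intro l₁ l₂ h
  induction h with
  | nil => intro x hx; simp at hx
  | cons hr _ ih =>
    intro x hx
    rcases List.mem_cons.1 hx with rfl | hx
    · exact ⟨_, List.mem_cons_self, hr⟩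
    · obtain ⟨y, hy, hxy⟩ := ih x hx
      exact ⟨y, List.mem_cons_of_mem _ hy, hxy⟩
  | cons_right _ ih =>
    intro x hx
    obtain ⟨y, hy, hxy⟩ := ih x hx
    exact ⟨y, List.mem_cons_of_mem _ hy, hxy⟩

theorem emb_refl : ∀ t : RTree, Emb t t := by
  have key : ∀ n : ℕ, ∀ t : RTree, t.size = n → Emb t t := by
    intro n
    induction n using Nat.strong_induction_on with
    | _ n ih =>
    intro t hn
    subst hn
    obtain ⟨l⟩ := t
    refine Emb.lift ?_
    rw [List.sublistForall₂_iff]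
    exact ⟨l, List.forall₂_same.2 fun x hx => ih _ (size_lt hx) x rfl, List.Sublist.refl l⟩
  exact fun t => key t.size t rfl

theorem emb_trans : ∀ a b c : RTree, Emb a b → Emb b c → Emb a c := by
  have key : ∀ n : ℕ, ∀ a b c : RTree, c.size = n → Emb a b → Emb b c → Emb a c := by
    intro n
    induction n using Nat.strong_induction_on with
    | _ n ih =>
    intro a b c hn hab hbc
    subst hn
    cases hbc with
    | sub hbc' hmem =>
      exact Emb.sub (ih _ (size_lt hmem) a b _ rfl hab hbc') hmem
    | @lift lb lc hlist =>
      cases hab with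
      | sub hab' hmem =>
        obtain ⟨c', hc', hbc'⟩ := sublistForall₂_exists_mem hlist _ hmem
        exact Emb.sub (ih _ (size_lt hc') a _ c' rfl hab' hbc') hc'
      | @lift la lb' hlist' =>
        refine Emb.lift ?_
        -- compose hlist' : SublistForall₂ Emb la lb, hlist : SublistForall₂ Emb lb lc
        have comp : ∀ lc' : List RTree, (∀ x ∈ lc', ∀ a' b', Emb a' b' → Emb b' x → Emb a' x) →
            ∀ la' lb'' : List RTree, List.SublistForall₂ Emb la' lb'' →
            List.SublistForall₂ Emb lb'' lc' → List.SublistForall₂ Emb la' lc' := by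
          intro lc' htr la' lb'' h1 h2
          induction h2 generalizing la' with
          | nil => cases h1; exact List.SublistForall₂.nil
          | @cons b₁ c₁ lb₂ lc₂ hbc htail ihtail =>
            cases h1 with
            | nil => exact List.SublistForall₂.nil
            | cons hab₁ h1tail =>
              exact List.SublistForall₂.cons
                (htr _ (List.mem_cons_self) _ _ hab₁ hbc)
                (ihtail (fun x hx => htr x (List.mem_cons_of_mem _ hx)) _ h1tail)
            | cons_right h1tail =>
              exact List.SublistForall₂.cons_right
                (ihtail (fun x hx => htr x (List.mem_cons_of_mem _ hx)) _ h1tail)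
          | @cons_right c₁ lb₂ lc₂ htail ihtail =>
            exact List.SublistForall₂.cons_right
              (ihtail (fun x hx => htr x (List.mem_cons_of_mem _ hx)) _ h1)
        exact comp lc (fun x hx a' b' h1 h2 => ih _ (size_lt hx) a' b' x rfl h1 h2) la lb hlist' hlist
  exact fun a b c => key c.size a b c rfl



instance : IsRefl RTree Emb := ⟨emb_refl⟩
instance : IsTrans RTree Emb := ⟨fun a b c => emb_trans a b c⟩
instance : IsPreorder RTree Emb := {}

def children : RTree → List RTree
  | .node l => l

theorem node_children (t : RTree) : RTree.node (children t) = t := by cases t; rfl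

theorem size_lt_children {t u : RTree} (h : t ∈ children u) : t.size < u.size := by
  cases u; exact size_lt h

theorem emb_pwo : (Set.univ : Set RTree).PartiallyWellOrderedOn Emb := by
  classical
  rw [Set.PartiallyWellOrderedOn.iff_not_exists_isMinBadSeq size]
  rintro ⟨f, hf, hmin⟩
  set S : Set RTree := {t | ∃ n, t ∈ children (f n)} with hS
  have hSpwo : S.PartiallyWellOrderedOn Emb := by
    rw [Set.partiallyWellOrderedOn_iff_exists_lt]
    intro g hg
    by_contra hcon
    push_neg at hcon
    choose idx hidx using hg
    have hex : ∃ n, ∃ k, idx k = n := ⟨idx 0, 0, rfl⟩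
    obtain ⟨k₀, hk₀⟩ := Nat.find_spec hex
    have hmins : ∀ k, Nat.find hex ≤ idx k := fun k => Nat.find_min' hex ⟨k, rfl⟩
    set m := Nat.find hex with hm
    set h : ℕ → RTree := fun i => if i < m then f i else g (k₀ + (i - m)) with hhdef
    refine hmin m h (fun j hj => (if_pos hj).symm) ?_ ?_
    · have : h m = g k₀ := by simp [hhdef]
      rw [this, ← hk₀]
      exact size_lt_children (hidx k₀)
    · refine ⟨fun _ => Set.mem_univ _, fun i j hij hemb => ?_⟩
      by_cases hjm : j < m
      · rw [hhdef] at hemb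
        simp only [if_pos hjm, if_pos (hij.trans hjm)] at hemb
        exact hf.2 i j hij hemb
      · by_cases him : i < m
        · rw [hhdef] at hemb
          simp only [if_pos him, if_neg hjm] at hemb
          set k := k₀ + (j - m) with hk
          have h2 : Emb (f i) (f (idx k)) := by
            rw [← node_children (f (idx k))]
            exact Emb.sub hemb (hidx k)
          exact hf.2 i (idx k) (lt_of_lt_of_le him (hmins k)) h2
        · rw [hhdef] at hemb
          simp only [if_neg him, if_neg hjm] at hemb
          exact hcon (k₀ + (i - m)) (k₀ + (j - m)) (by omega) hemb
  have hL := Set.PartiallyWellOrderedOn.partiallyWellOrderedOn_sublistForall₂ Emb hSpwo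
  obtain ⟨i, j, hij, hr⟩ := hL.exists_lt (f := fun n => children (f n)) (fun n x hx => ⟨n, hx⟩)
  refine hf.2 i j hij ?_
  rw [← node_children (f i), ← node_children (f j)]
  exact Emb.lift hr

theorem emb_wqo (f : ℕ → RTree) : ∃ i j, i < j ∧ Emb (f i) (f j) := by
  obtain ⟨i, j, hij, hr⟩ := emb_pwo.exists_lt (f := f) (fun n => Set.mem_univ _)
  exact ⟨i, j, hij, hr⟩

end RTree

namespace SimpleGraph
variable {V : Type} {G : SimpleGraph V}

/-- `u` and `v` are connected by a walk staying inside `S`. -/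
def ConnIn (G : SimpleGraph V) (S : Set V) (u v : V) : Prop :=
  ∃ w : G.Walk u v, ∀ x ∈ w.support, x ∈ S

theorem ConnIn.mem_left {S : Set V} {u v : V} (h : G.ConnIn S u v) : u ∈ S := by
  obtain ⟨w, hw⟩ := h; exact hw u w.start_mem_support

theorem ConnIn.mem_right {S : Set V} {u v : V} (h : G.ConnIn S u v) : v ∈ S := by
  obtain ⟨w, hw⟩ := h; exact hw v w.end_mem_support

theorem ConnIn.refl {S : Set V} {u : V} (h : u ∈ S) : G.ConnIn S u u :=
  ⟨Walk.nil, by simp [h]⟩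

theorem ConnIn.symm {S : Set V} {u v : V} (h : G.ConnIn S u v) : G.ConnIn S v u := by
  obtain ⟨w, hw⟩ := h
  exact ⟨w.reverse, by simpa [Walk.support_reverse] using hw⟩

theorem ConnIn.trans {S : Set V} {u v x : V} (h : G.ConnIn S u v) (h' : G.ConnIn S v x) :
    G.ConnIn S u x := by
  obtain ⟨w, hw⟩ := h
  obtain ⟨w', hw'⟩ := h'
  refine ⟨w.append w', fun y hy => ?_⟩
  rw [Walk.mem_support_append_iff] at hy
  exact hy.elim (hw y) (hw' y)

theorem ConnIn.adj_extend {S : Set V} {u v x : V} (h : G.ConnIn S u v) (ha : G.Adj v x)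
    (hx : x ∈ S) : G.ConnIn S u x := by
  refine h.trans ⟨ha.toWalk, fun y hy => ?_⟩
  simp only [Adj.toWalk, Walk.support_cons, Walk.support_nil, List.mem_cons,
    List.mem_singleton, List.not_mem_nil, or_false] at hy
  rcases hy with hy | hy
  · subst hy; exact h.mem_right
  · subst hy; exact hx

theorem ConnIn.mono {S S' : Set V} {u v : V} (hss : S ⊆ S') (h : G.ConnIn S u v) :
    G.ConnIn S' u v := by
  obtain ⟨w, hw⟩ := h; exact ⟨w, fun x hx => hss (hw x hx)⟩

theorem reachable_induce_of_connIn {S : Set V} : ∀ {u v : V} (h : G.ConnIn S u v),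
    (G.induce S).Reachable ⟨u, h.mem_left⟩ ⟨v, h.mem_right⟩ := by
  have key : ∀ {u v : V} (w : G.Walk u v) (hw : ∀ x ∈ w.support, x ∈ S),
      (G.induce S).Reachable ⟨u, hw u w.start_mem_support⟩ ⟨v, hw v w.end_mem_support⟩ := by
    intro u v w
    induction w with
    | nil => intro hw; rfl
    | @cons a b c hadj p ih =>
      intro hw
      have hb : ∀ x ∈ p.support, x ∈ S := fun x hx => hw x (by simp [Walk.support_cons, hx])
      have ha : a ∈ S := hw a (by simp [Walk.support_cons])
      have h1 : (G.induce S).Adj ⟨a, ha⟩ ⟨b, hb b p.start_mem_support⟩ := by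
        simp only [comap_adj, Function.Embedding.coe_subtype]
        exact hadj
      exact (h1.reachable).trans (ih hb)
  intro u v h
  obtain ⟨w, hw⟩ := h
  exact key w hw

theorem connIn_of_reachable_induce {S : Set V} {u v : ↥S}
    (h : (G.induce S).Reachable u v) : G.ConnIn S u.1 v.1 := by
  obtain ⟨p⟩ := h
  refine ⟨p.map (Embedding.induce S).toHom, fun x hx => ?_⟩
  erw [Walk.support_map] at hx; rw [List.mem_map] at hx
  obtain ⟨y, _, rfl⟩ := hx
  exact y.2

theorem connected_induce_iff' {S : Set V} :
    (G.induce S).Connected ↔ S.Nonempty ∧ ∀ u ∈ S, ∀ v ∈ S, G.ConnIn S u v := by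
  constructor
  · intro h
    obtain ⟨⟨x, hx⟩⟩ := h.nonempty
    refine ⟨⟨x, hx⟩, fun u hu v hv => ?_⟩
    exact connIn_of_reachable_induce (h.preconnected ⟨u, hu⟩ ⟨v, hv⟩)
  · rintro ⟨⟨x, hx⟩, h⟩
    have : Nonempty ↥S := ⟨⟨x, hx⟩⟩
    refine ⟨fun u v => ?_⟩
    have := reachable_induce_of_connIn (h u.1 u.2 v.1 v.2)
    simpa using this

theorem connected_induce_singleton (r : V) : (G.induce {r}).Connected := by
  rw [connected_induce_iff']
  exact ⟨⟨r, rfl⟩, by rintro u rfl v rfl; exact ConnIn.refl rfl⟩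

theorem connected_induce_insert {S : Set V} {x y : V} (hc : (G.induce S).Connected)
    (ha : G.Adj x y) (hy : y ∈ S) : (G.induce (insert x S)).Connected := by
  rw [connected_induce_iff'] at hc ⊢
  obtain ⟨hne, h⟩ := hc
  have hsub : S ⊆ insert x S := Set.subset_insert _ _
  have hxy : G.ConnIn (insert x S) x y :=
    (ConnIn.refl (Set.mem_insert _ _)).adj_extend ha (hsub hy)
  have key : ∀ u ∈ insert x S, G.ConnIn (insert x S) u y := by
    intro u hu
    rcases Set.mem_insert_iff.1 hu with hux | hu
    · subst hux; exact hxy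
    · exact (h u hu y hy).mono hsub
  exact ⟨⟨y, hsub hy⟩, fun u hu v hv => (key u hu).trans (key v hv).symm⟩



end SimpleGraph

theorem sublistForall₂_exists_index {α β : Type*} {r : α → β → Prop} {l₁ : List α} {l₂ : List β}
    (h : List.SublistForall₂ r l₁ l₂) :
    ∃ φ : Fin l₁.length → Fin l₂.length, StrictMono φ ∧ ∀ i, r (l₁.get i) (l₂.get (φ i)) := by
  induction h with
  | nil => exact ⟨Fin.elim0, fun i => i.elim0, fun i => i.elim0⟩
  | @cons a b t₁ t₂ hab h ih =>
    obtain ⟨φ, hmono, hrel⟩ := ih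
    refine ⟨Fin.cases ⟨0, Nat.succ_pos _⟩ (fun i => (φ i).succ), ?_, ?_⟩
    · intro i j hij
      induction i using Fin.cases with
      | zero =>
        induction j using Fin.cases with
        | zero => simp at hij
        | succ j => simp only [Fin.cases_zero, Fin.cases_succ]; exact Fin.succ_pos _
      | succ i =>
        induction j using Fin.cases with
        | zero => exact absurd hij (by simp [Fin.le_zero_iff])
        | succ j =>
          simp only [Fin.cases_succ, Fin.succ_lt_succ_iff]
          exact hmono (by simpa using hij)
    · intro i
      induction i using Fin.cases with
      | zero => simpa using hab
      | succ i => simpa using hrel i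
  | @cons_right b t₁ t₂ h ih =>
    obtain ⟨φ, hmono, hrel⟩ := ih
    refine ⟨fun i => (φ i).succ, fun i j hij => by
      simpa [Fin.succ_lt_succ_iff] using hmono hij, fun i => by simpa using hrel i⟩

namespace SimpleGraph

/-- A "rooted minor" of induced subgraphs: branch sets inside `A₂`, root branch set
containing `r₂`. -/
def RMinor {V₁ V₂ : Type} (T₁ : SimpleGraph V₁) (T₂ : SimpleGraph V₂)
    (A₁ : Set V₁) (r₁ : V₁) (A₂ : Set V₂) (r₂ : V₂) : Prop :=
  ∃ f : V₁ → Set V₂,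
    (∀ w ∈ A₁, (f w).Nonempty ∧ f w ⊆ A₂ ∧ (T₂.induce (f w)).Connected) ∧
    (∀ w₁ ∈ A₁, ∀ w₂ ∈ A₁, w₁ ≠ w₂ → Disjoint (f w₁) (f w₂)) ∧
    (∀ w₁ ∈ A₁, ∀ w₂ ∈ A₁, T₁.Adj w₁ w₂ → ∃ u ∈ f w₁, ∃ v ∈ f w₂, T₂.Adj u v) ∧
    r₂ ∈ f r₁

/-- The rooted tree `s` is a faithful description of the induced subgraph of `T` on `A`,
rooted at `r`. -/
inductive Models {V : Type} (T : SimpleGraph V) : RTree → Set V → V → Prop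
  | mk (l : List RTree) (L : List (Set V × V)) (r : V)
      (hnr : ∀ p ∈ L, r ∉ p.1)
      (hdisj : L.Pairwise fun p q => Disjoint p.1 q.1)
      (hadjroot : ∀ p ∈ L, T.Adj r p.2)
      (hedge_r : ∀ v ∈ insert r (⋃ p ∈ L, p.1), T.Adj r v → ∃ p ∈ L, v = p.2)
      (hedge : ∀ u v : V, T.Adj u v → v ∈ insert r (⋃ p ∈ L, p.1) → v ≠ r →
        ∀ p ∈ L, u ∈ p.1 → v ∈ p.1)
      (hlen : l.length = L.length)
      (hM : ∀ i : Fin l.length, Models T (l.get i)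
        (L.get (Fin.cast hlen i)).1 (L.get (Fin.cast hlen i)).2) :
      Models T (.node l) (insert r (⋃ p ∈ L, p.1)) r

theorem Models.root_mem {V : Type} {T : SimpleGraph V} {s : RTree} {A : Set V} {r : V}
    (h : Models T s A r) : r ∈ A := by
  cases h; exact Set.mem_insert _ _

theorem pairwise_disjoint_get {V : Type} {L : List (Set V × V)}
    (h : L.Pairwise fun p q => Disjoint p.1 q.1) {i j : Fin L.length} (hij : i ≠ j) :
    Disjoint (L.get i).1 (L.get j).1 := by
  rcases lt_or_gt_of_ne hij with hlt | hgt
  · exact (List.pairwise_iff_get.1 h) i j hlt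
  · exact ((List.pairwise_iff_get.1 h) j i hgt).symm

theorem models_emb_rminor {V₁ V₂ : Type} {T₁ : SimpleGraph V₁} {T₂ : SimpleGraph V₂} :
    ∀ {s t : RTree}, RTree.Emb s t → ∀ {A₁ : Set V₁} {r₁ : V₁} {A₂ : Set V₂} {r₂ : V₂},
      Models T₁ s A₁ r₁ → Models T₂ t A₂ r₂ → RMinor T₁ T₂ A₁ r₁ A₂ r₂ := by
  have key : ∀ n : ℕ, ∀ s t : RTree, t.size = n → RTree.Emb s t →
      ∀ (A₁ : Set V₁) (r₁ : V₁) (A₂ : Set V₂) (r₂ : V₂),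
      Models T₁ s A₁ r₁ → Models T₂ t A₂ r₂ → RMinor T₁ T₂ A₁ r₁ A₂ r₂ := by
    intro n
    induction n using Nat.strong_induction_on with
    | _ n ih =>
    rintro s t rfl hemb A₁ r₁ A₂ r₂ hM₁ hM₂
    cases hemb with
    | @sub s t' lt hemb' hmem =>
      -- obtain the child data of the target
      cases hM₂ with
      | mk lt' L₂ r₂ hnr₂ hdisj₂ hadjroot₂ hedge_r₂ hedge₂ hlen₂ hM₂c =>
      obtain ⟨i, hi⟩ := List.mem_iff_get.1 hmem
      have hMt' : Models T₂ t' (L₂.get (Fin.cast hlen₂ i)).1 (L₂.get (Fin.cast hlen₂ i)).2 := by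
        rw [← hi]; exact hM₂c i
      set p := L₂.get (Fin.cast hlen₂ i) with hp
      have hpmem : p ∈ L₂ := List.get_mem _ _
      have hsubA₂ : p.1 ⊆ insert r₂ (⋃ q ∈ L₂, q.1) :=
        fun x hx => Set.mem_insert_iff.2 (Or.inr (Set.mem_biUnion hpmem hx))
      obtain ⟨f, hprop, hdisj, hedge, hroot⟩ :=
        ih _ (RTree.size_lt hmem) s t' rfl hemb' A₁ r₁ p.1 p.2 hM₁ hMt'
      classical
      refine ⟨fun w => if w = r₁ then insert r₂ (f r₁) else f w, ?_, ?_, ?_, ?_⟩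
      · intro w hw
        beta_reduce
        by_cases hwr : w = r₁
        · rw [if_pos hwr]
          obtain ⟨hne, hsub, hconn⟩ := hprop r₁ (hwr ▸ hw)
          exact ⟨Set.insert_nonempty _ _,
            Set.insert_subset (Set.mem_insert _ _) (fun x hx => hsubA₂ (hsub hx)),
            connected_induce_insert hconn (hadjroot₂ p hpmem) hroot⟩
        · rw [if_neg hwr]
          obtain ⟨hne, hsub, hconn⟩ := hprop w hw
          exact ⟨hne, fun x hx => hsubA₂ (hsub hx), hconn⟩
      · intro w₁ hw₁ w₂ hw₂ hne
        beta_reduce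
        have hr₂p : r₂ ∉ p.1 := hnr₂ p hpmem
        by_cases h1 : w₁ = r₁
        · have h2 : w₂ ≠ r₁ := fun hc => hne (h1.trans hc.symm)
          rw [if_pos h1, if_neg h2]
          refine Set.disjoint_left.2 ?_
          intro x hx hx2
          rcases Set.mem_insert_iff.1 hx with rfl | hx1
          · exact hr₂p ((hprop w₂ hw₂).2.1 hx2)
          · exact Set.disjoint_left.1 (hdisj _ hw₁ _ hw₂ hne)
              (by rw [h1]; exact hx1) hx2
        · by_cases h2 : w₂ = r₁
          · rw [if_neg h1, if_pos h2]
            refine Set.disjoint_right.2 ?_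
            intro x hx hx2
            rcases Set.mem_insert_iff.1 hx with rfl | hx1
            · exact hr₂p ((hprop w₁ hw₁).2.1 hx2)
            · exact Set.disjoint_left.1 (hdisj _ hw₁ _ hw₂ hne) hx2
                (by rw [h2]; exact hx1)
          · rw [if_neg h1, if_neg h2]
            exact hdisj _ hw₁ _ hw₂ hne
      · intro w₁ hw₁ w₂ hw₂ hadj
        beta_reduce
        obtain ⟨u, hu, v, hv, huv⟩ := hedge _ hw₁ _ hw₂ hadj
        refine ⟨u, ?_, v, ?_, huv⟩
        · by_cases h1 : w₁ = r₁
          · rw [if_pos h1]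
            exact Set.mem_insert_iff.2 (Or.inr (by rw [← h1]; exact hu))
          · rw [if_neg h1]; exact hu
        · by_cases h2 : w₂ = r₁
          · rw [if_pos h2]
            exact Set.mem_insert_iff.2 (Or.inr (by rw [← h2]; exact hv))
          · rw [if_neg h2]; exact hv
      · beta_reduce
        rw [if_pos rfl]
        exact Set.mem_insert _ _
    | @lift ls lt hsl =>
      cases hM₁ with
      | mk ls' L₁ r₁ hnr₁ hdisj₁ hadjroot₁ hedge_r₁ hedge₁ hlen₁ hM₁c =>
      cases hM₂ with
      | mk lt' L₂ r₂ hnr₂ hdisj₂ hadjroot₂ hedge_r₂ hedge₂ hlen₂ hM₂c =>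
      obtain ⟨φ, hφmono, hφrel⟩ := sublistForall₂_exists_index hsl
      classical
      -- For each child part of the source, a rooted minor into the corresponding target part
      have H : ∀ i : Fin ls.length, ∃ f : V₁ → Set V₂,
          (∀ w ∈ (L₁.get (Fin.cast hlen₁ i)).1, (f w).Nonempty ∧
            f w ⊆ (L₂.get (Fin.cast hlen₂ (φ i))).1 ∧ (T₂.induce (f w)).Connected) ∧
          (∀ w₁ ∈ (L₁.get (Fin.cast hlen₁ i)).1, ∀ w₂ ∈ (L₁.get (Fin.cast hlen₁ i)).1,
            w₁ ≠ w₂ → Disjoint (f w₁) (f w₂)) ∧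
          (∀ w₁ ∈ (L₁.get (Fin.cast hlen₁ i)).1, ∀ w₂ ∈ (L₁.get (Fin.cast hlen₁ i)).1,
            T₁.Adj w₁ w₂ → ∃ u ∈ f w₁, ∃ v ∈ f w₂, T₂.Adj u v) ∧
          (L₂.get (Fin.cast hlen₂ (φ i))).2 ∈ f (L₁.get (Fin.cast hlen₁ i)).2 := by
        intro i
        exact ih _ (RTree.size_lt (List.get_mem lt (φ i))) _ _ rfl (hφrel i) _ _ _ _
          (hM₁c i) (hM₂c (φ i))
      choose F hF using H
      -- membership helpers
      have mem_cases : ∀ w ∈ insert r₁ (⋃ p ∈ L₁, p.1), w = r₁ ∨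
          ∃ i : Fin ls.length, w ∈ (L₁.get (Fin.cast hlen₁ i)).1 := by
        intro w hw
        rcases Set.mem_insert_iff.1 hw with h | h
        · exact Or.inl h
        · obtain ⟨p, hp, hwp⟩ := Set.mem_iUnion₂.1 h
          obtain ⟨j, hj⟩ := List.mem_iff_get.1 hp
          refine Or.inr ⟨Fin.cast hlen₁.symm j, ?_⟩
          rw [show Fin.cast hlen₁ (Fin.cast hlen₁.symm j) = j from rfl, hj]
          exact hwp
      have part_unique : ∀ (w : V₁) (i j : Fin ls.length),
          w ∈ (L₁.get (Fin.cast hlen₁ i)).1 → w ∈ (L₁.get (Fin.cast hlen₁ j)).1 → i = j := by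
        intro w i j hi hj
        by_contra hne
        have : (Fin.cast hlen₁ i) ≠ (Fin.cast hlen₁ j) := fun hc => hne (by
          have := congrArg (Fin.cast hlen₁.symm) hc; simpa using this)
        exact Set.disjoint_left.1 (pairwise_disjoint_get hdisj₁ this) hi hj
      have hnotr : ∀ (w : V₁) (i : Fin ls.length), w ∈ (L₁.get (Fin.cast hlen₁ i)).1 → w ≠ r₁ :=
        fun w i hw hc => hnr₁ _ (List.get_mem _ _) (hc ▸ hw)
      set f : V₁ → Set V₂ := fun w =>
        if w = r₁ then {r₂}
        else ⋃ i : Fin ls.length, if w ∈ (L₁.get (Fin.cast hlen₁ i)).1 then F i w else ∅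
        with hfdef
      have hfr : f r₁ = {r₂} := by simp [hfdef]
      have f_eq : ∀ (w : V₁) (i : Fin ls.length), w ∈ (L₁.get (Fin.cast hlen₁ i)).1 →
          f w = F i w := by
        intro w i hw
        rw [hfdef]
        simp only [if_neg (hnotr w i hw)]
        ext x
        simp only [Set.mem_iUnion]
        constructor
        · rintro ⟨j, hj⟩
          by_cases hwj : w ∈ (L₁.get (Fin.cast hlen₁ j)).1
          · rw [if_pos hwj] at hj
            rwa [part_unique w i j hw hwj]
          · rw [if_neg hwj] at hj; exact absurd hj (Set.notMem_empty x)
        · intro hx; exact ⟨i, by rw [if_pos hw]; exact hx⟩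
      have fsubA₂ : ∀ (i : Fin ls.length) (x : Set V₂),
          x ⊆ (L₂.get (Fin.cast hlen₂ (φ i))).1 → x ⊆ insert r₂ (⋃ p ∈ L₂, p.1) :=
        fun i x hx y hy => Set.mem_insert_iff.2
          (Or.inr (Set.mem_biUnion (List.get_mem _ _) (hx hy)))
      have hr₂notin : ∀ i : Fin ls.length, r₂ ∉ (L₂.get (Fin.cast hlen₂ (φ i))).1 :=
        fun i => hnr₂ _ (List.get_mem _ _)
      refine ⟨f, ?_, ?_, ?_, ?_⟩
      · intro w hw
        rcases mem_cases w hw with hwr | ⟨i, hi⟩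
        · rw [hwr, hfr]
          exact ⟨⟨r₂, rfl⟩, Set.singleton_subset_iff.2 (Set.mem_insert _ _),
            connected_induce_singleton r₂⟩
        · rw [f_eq w i hi]
          obtain ⟨hne, hsub, hconn⟩ := (hF i).1 w hi
          exact ⟨hne, fsubA₂ i _ hsub, hconn⟩
      · intro w₁ hw₁ w₂ hw₂ hne
        rcases mem_cases w₁ hw₁ with h1 | ⟨i, hi⟩
        · rcases mem_cases w₂ hw₂ with h2 | ⟨j, hj⟩
          · exact absurd (h1.trans h2.symm) hne
          · rw [h1, hfr, f_eq w₂ j hj, Set.disjoint_singleton_left]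
            exact fun hc => hr₂notin j (((hF j).1 w₂ hj).2.1 hc)
        · rcases mem_cases w₂ hw₂ with h2 | ⟨j, hj⟩
          · rw [h2, hfr, f_eq w₁ i hi, Set.disjoint_singleton_right]
            exact fun hc => hr₂notin i (((hF i).1 w₁ hi).2.1 hc)
          · rw [f_eq w₁ i hi, f_eq w₂ j hj]
            by_cases hij : i = j
            · subst hij
              exact (hF i).2.1 w₁ hi w₂ hj hne
            · have hφne : Fin.cast hlen₂ (φ i) ≠ Fin.cast hlen₂ (φ j) := by
                intro hc
                apply hij
                apply hφmono.injective
                have := congrArg (Fin.cast hlen₂.symm) hc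
                simpa using this
              exact Set.disjoint_of_subset (((hF i).1 w₁ hi).2.1) (((hF j).1 w₂ hj).2.1)
                (pairwise_disjoint_get hdisj₂ hφne)
      · -- edges
        have root_case : ∀ w₂ ∈ insert r₁ (⋃ p ∈ L₁, p.1), T₁.Adj r₁ w₂ →
            ∃ u ∈ f r₁, ∃ v ∈ f w₂, T₂.Adj u v := by
          intro w₂ hw₂ hadj
          obtain ⟨p, hp, hw2p⟩ := hedge_r₁ w₂ hw₂ hadj
          obtain ⟨j, hj⟩ := List.mem_iff_get.1 hp
          have hj' : w₂ = (L₁.get (Fin.cast hlen₁ (Fin.cast hlen₁.symm j))).2 := by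
            rw [show Fin.cast hlen₁ (Fin.cast hlen₁.symm j) = j from rfl, hj]; exact hw2p
          set i : Fin ls.length := Fin.cast hlen₁.symm j with hidef
          have hw₂mem : w₂ ∈ (L₁.get (Fin.cast hlen₁ i)).1 := by
            rw [hj']
            exact (hM₁c i).root_mem
          refine ⟨r₂, by rw [hfr]; exact Set.mem_singleton _,
            (L₂.get (Fin.cast hlen₂ (φ i))).2, ?_, ?_⟩
          · rw [f_eq w₂ i hw₂mem, hj']
            exact (hF i).2.2.2
          · exact hadjroot₂ _ (List.get_mem _ _)
        intro w₁ hw₁ w₂ hw₂ hadj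
        rcases mem_cases w₁ hw₁ with h1 | ⟨i, hi⟩
        · rw [h1]
          exact root_case w₂ hw₂ (h1 ▸ hadj)
        · rcases mem_cases w₂ hw₂ with h2 | ⟨j, hj⟩
          · rw [h2]
            obtain ⟨u, hu, v, hv, huv⟩ := root_case w₁ hw₁ (h2 ▸ hadj.symm)
            exact ⟨v, hv, u, hu, huv.symm⟩
          · have hw₂r : w₂ ≠ r₁ := hnotr w₂ j hj
            have hw2i : w₂ ∈ (L₁.get (Fin.cast hlen₁ i)).1 :=
              hedge₁ w₁ w₂ hadj hw₂ hw₂r _ (List.get_mem _ _) hi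
            have hij : i = j := part_unique w₂ i j hw2i hj
            subst hij
            rw [f_eq w₁ i hi, f_eq w₂ i hj]
            exact (hF i).2.2.1 w₁ hi w₂ hj hadj
      · rw [hfr]
        exact Set.mem_singleton _
  exact fun {s t} hemb {A₁ r₁ A₂ r₂} h1 h2 => key t.size s t rfl hemb A₁ r₁ A₂ r₂ h1 h2



theorem exists_models {V : Type} [Fintype V] {T : SimpleGraph V} (hT : T.IsTree) :
    ∀ (A : Set V) (r : V), r ∈ A → (T.induce A).Connected → ∃ s, Models T s A r := by
  classical
  have key : ∀ (n : ℕ) (A : Set V), A.ncard = n → ∀ r : V, r ∈ A → (T.induce A).Connected →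
      ∃ s, Models T s A r := by
    intro n
    induction n using Nat.strong_induction_on with
    | _ n ihn =>
    rintro A rfl r hrA hconn
    set A' : Set V := A \ {r} with hA'
    set N : Set V := {v | T.Adj r v ∧ v ∈ A} with hN
    set comp : V → Set V := fun c => {v | T.ConnIn A' c v} with hcomp
    have hcompA' : ∀ c, comp c ⊆ A' := fun c v hv => hv.mem_right
    -- basic facts about members of N
    have hcmem : ∀ c ∈ N, c ∈ comp c := by
      rintro c ⟨hadj, hcA⟩
      exact SimpleGraph.ConnIn.refl ⟨hcA, fun hc => T.ne_of_adj hadj (by simpa using hc.symm)⟩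
    -- connectivity inside components
    have hcomp_conn : ∀ {c u : V}, T.ConnIn A' c u → T.ConnIn (comp c) c u := by
      intro c u h
      obtain ⟨w, hw⟩ := h
      refine ⟨w, fun x hx => ?_⟩
      exact ⟨w.takeUntil x hx, fun y hy =>
        hw y (SimpleGraph.Walk.support_takeUntil_subset _ hx hy)⟩
    -- components of distinct neighbors are disjoint
    have hcomp_disj : ∀ c ∈ N, ∀ c' ∈ N, c ≠ c' → Disjoint (comp c) (comp c') := by
      rintro c ⟨hadjc, hcA⟩ c' ⟨hadjc', hc'A⟩ hne
      rw [Set.disjoint_left]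
      intro v hvc hvc'
      exfalso
      have hcc' : T.ConnIn A' c c' := hvc.trans hvc'.symm
      obtain ⟨w, hw⟩ := hcc'
      have hp₁ : w.toPath.1.IsPath := w.toPath.2
      have hp₁supp : ∀ x ∈ w.toPath.1.support, x ∈ A' := fun x hx =>
        hw x (SimpleGraph.Walk.support_toPath_subset w hx)
      set p₂ : T.Walk c c' := SimpleGraph.Walk.cons (T.adj_symm hadjc)
        (SimpleGraph.Walk.cons hadjc' SimpleGraph.Walk.nil) with hp₂def
      have hp₂ : p₂.IsPath := by
        rw [hp₂def, SimpleGraph.Walk.cons_isPath_iff, SimpleGraph.Walk.cons_isPath_iff]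
        refine ⟨⟨SimpleGraph.Walk.IsPath.nil, by simp [T.ne_of_adj hadjc']⟩, ?_⟩
        simp only [SimpleGraph.Walk.support_cons, SimpleGraph.Walk.support_nil]
        intro hc
        rcases List.mem_cons.1 hc with hc | hc
        · exact T.ne_of_adj hadjc hc.symm
        · rw [List.mem_singleton] at hc; exact hne hc
      obtain ⟨p, hup, huniq⟩ := hT.existsUnique_path c c'
      have e1 : w.toPath.1 = p := huniq _ hp₁
      have e2 : p₂ = p := huniq _ hp₂
      have hrp : r ∈ p.support := by
        rw [← e2, hp₂def]
        simp [SimpleGraph.Walk.support_cons]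
      rw [← e1] at hrp
      exact (hp₁supp r hrp).2 rfl
    -- walks from r: split the first edge
    have hcover : ∀ v ∈ A, v ≠ r → ∃ c ∈ N, v ∈ comp c := by
      intro v hvA hvr
      have hcon : T.ConnIn A r v := by
        rw [connected_induce_iff'] at hconn
        exact hconn.2 r hrA v hvA
      obtain ⟨w, hw⟩ := hcon
      obtain ⟨q, hq, hqsupp⟩ : ∃ q : T.Walk r v, q.IsPath ∧ ∀ x ∈ q.support, x ∈ A :=
        ⟨w.toPath.1, w.toPath.2, fun x hx => hw x (SimpleGraph.Walk.support_toPath_subset w hx)⟩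
      cases q with
      | nil => exact absurd rfl hvr
      | @cons _ c _ hadj q' =>
        rw [SimpleGraph.Walk.cons_isPath_iff] at hq
        have hcN : c ∈ N := ⟨hadj, hqsupp c (by simp [SimpleGraph.Walk.support_cons])⟩
        refine ⟨c, hcN, ⟨q', fun x hx => ⟨?_, ?_⟩⟩⟩
        · exact hqsupp x (by simp [SimpleGraph.Walk.support_cons, hx])
        · intro hc
          rw [Set.mem_singleton_iff] at hc
          subst hc
          exact hq.2 hx
    -- assemble the decomposition
    have hNfin : N.Finite := Set.toFinite N
    set cs : List V := hNfin.toFinset.toList with hcs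
    have hcsmem : ∀ c, c ∈ cs ↔ c ∈ N := by
      intro c; rw [hcs, Finset.mem_toList, Set.Finite.mem_toFinset]
    have hcsnodup : cs.Nodup := Finset.nodup_toList _
    have hch : ∀ c ∈ N, ∃ s, Models T s (comp c) c := by
      intro c hcN
      have hsub : comp c ⊆ A := fun v hv => ((hcompA' c) hv).1
      have hss : comp c ⊂ A := by
        rw [Set.ssubset_iff_of_subset hsub]
        exact ⟨r, hrA, fun hc => ((hcompA' c) hc).2 rfl⟩
      have hlt : (comp c).ncard < A.ncard := Set.ncard_lt_ncard hss (Set.toFinite A)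
      refine ihn _ hlt (comp c) rfl c (hcmem c hcN) ?_
      rw [connected_induce_iff']
      refine ⟨⟨c, hcmem c hcN⟩, fun u hu v hv => ?_⟩
      exact ((hcomp_conn hu).symm).trans (hcomp_conn hv)
    choose Fc hFc using hch
    set l : List RTree := cs.map (fun c => if h : c ∈ N then Fc c h else .node []) with hl
    set L : List (Set V × V) := cs.map (fun c => (comp c, c)) with hL
    have hlen : l.length = L.length := by simp [hl, hL]
    have hU : insert r (⋃ p ∈ L, p.1) = A := by
      ext v
      simp only [Set.mem_insert_iff, Set.mem_iUnion, hL, List.mem_map]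
      constructor
      · rintro (rfl | ⟨p, ⟨⟨c, hc, rfl⟩, hvp⟩⟩)
        · exact hrA
        · exact ((hcompA' c) hvp).1
      · intro hvA
        by_cases hvr : v = r
        · exact Or.inl hvr
        · obtain ⟨c, hcN, hvc⟩ := hcover v hvA hvr
          exact Or.inr ⟨(comp c, c), ⟨c, (hcsmem c).2 hcN, rfl⟩, hvc⟩
    have hnr : ∀ p ∈ L, r ∉ p.1 := by
      rintro p hp
      rw [hL, List.mem_map] at hp
      obtain ⟨c, hc, rfl⟩ := hp
      exact fun hc' => ((hcompA' c) hc').2 rfl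
    have hdisj : L.Pairwise fun p q => Disjoint p.1 q.1 := by
      rw [hL, List.pairwise_map]
      refine List.Pairwise.imp_of_mem ?_ hcsnodup
      intro a b ha hb hab
      exact hcomp_disj a ((hcsmem a).1 ha) b ((hcsmem b).1 hb) hab
    have hadjroot : ∀ p ∈ L, T.Adj r p.2 := by
      rintro p hp
      rw [hL, List.mem_map] at hp
      obtain ⟨c, hc, rfl⟩ := hp
      exact ((hcsmem c).1 hc).1
    have hedge_r : ∀ v ∈ insert r (⋃ p ∈ L, p.1), T.Adj r v → ∃ p ∈ L, v = p.2 := by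
      intro v hv hadj
      rw [hU] at hv
      have hvN : v ∈ N := ⟨hadj, hv⟩
      exact ⟨(comp v, v), by rw [hL, List.mem_map]; exact ⟨v, (hcsmem v).2 hvN, rfl⟩, rfl⟩
    have hedge : ∀ u v : V, T.Adj u v → v ∈ insert r (⋃ p ∈ L, p.1) → v ≠ r →
        ∀ p ∈ L, u ∈ p.1 → v ∈ p.1 := by
      intro u v hadj hv hvr p hp hu
      rw [hU] at hv
      rw [hL, List.mem_map] at hp
      obtain ⟨c, hc, rfl⟩ := hp
      exact (hu : T.ConnIn A' c u).adj_extend hadj ⟨hv, by simp [hvr]⟩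
    have hM : ∀ i : Fin l.length, Models T (l.get i)
        (L.get (Fin.cast hlen i)).1 (L.get (Fin.cast hlen i)).2 := by
      intro i
      have hlc : l.length = cs.length := by simp [hl]
      have hcmem' : cs.get (Fin.cast hlc i) ∈ N :=
        (hcsmem _).1 (List.get_mem _ _)
      have h1 : l.get i = Fc (cs.get (Fin.cast hlc i)) hcmem' := by
        rw [List.get_of_eq hl, List.get_eq_getElem, List.getElem_map, dif_pos ((hcsmem _).1 (List.getElem_mem ..))]
        exact rfl
      have h2 : L.get (Fin.cast hlen i) =
          (comp (cs.get (Fin.cast hlc i)), cs.get (Fin.cast hlc i)) := by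
        rw [List.get_of_eq hL, List.get_eq_getElem, List.getElem_map]
        exact rfl
      rw [h1, h2]
      exact hFc _ hcmem'
    exact ⟨.node l, hU ▸ Models.mk l L r hnr hdisj hadjroot hedge_r hedge hlen hM⟩
  intro A r h1 h2
  exact key A.ncard A rfl r h1 h2


theorem exists_models_univ {V : Type} [Fintype V] {T : SimpleGraph V} (hT : T.IsTree) (r : V) :
    ∃ s, Models T s Set.univ r := by
  refine exists_models hT Set.univ r trivial ?_
  rw [connected_induce_iff']
  refine ⟨⟨r, trivial⟩, fun u _ v _ => ?_⟩
  obtain ⟨w⟩ := hT.isConnected.preconnected u v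
  exact ⟨w, fun x _ => trivial⟩

end SimpleGraph

/-- Kruskal's tree theorem (graph-minor form): in any infinite sequence of
finite trees, some tree is a minor of a later one. -/
theorem kruskal_tree_minor (V : ℕ → Type) (hV : ∀ n, Fintype (V n))
    (T : ∀ n, SimpleGraph (V n)) (hT : ∀ n, (T n).IsTree) :
    ∃ i j : ℕ, i < j ∧ (T i).IsMinor (T j) := by
  classical
  have hne : ∀ n, Nonempty (V n) := fun n => (hT n).isConnected.nonempty
  have hmodels : ∀ n, ∃ s : RTree, SimpleGraph.Models (T n) s Set.univ ((hne n).some) := by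
    intro n
    haveI := hV n
    exact SimpleGraph.exists_models_univ (hT n) _
  choose s hs using hmodels
  obtain ⟨i, j, hij, hemb⟩ := RTree.emb_wqo s
  obtain ⟨f, hprop, hdisj, hedge, -⟩ :=
    SimpleGraph.models_emb_rminor hemb (hs i) (hs j)
  refine ⟨i, j, hij, f, fun w => (hprop w trivial).1, fun w => (hprop w trivial).2.2,
    fun w₁ w₂ hne' => hdisj w₁ trivial w₂ trivial hne',
    fun w₁ w₂ hadj => hedge w₁ trivial w₂ trivial hadj⟩
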